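/- Let ρ : F₂ → Isom(X) be a group homomorphism from the free group on two generators to the isometry group of a geodesic δ-hyperbolic metric space X. Assume there exist constants C > 0 and D ≥ 0 such that l_S(ρ(γ)) ≥ ‖γ‖/C − D for every primitive element γ ∈ F₂. Then (i) l_S(ρ(γ)) > 0 for every primitive γ ∈ F₂ (i.e. ρ(γ) is hyperbolic), and (ii) for every K ≥ 0 the set of cyclically reduced primitive elements γ ∈ F₂ with l_S(ρ(γ)) ≤ K is finite. -/

import Mathlib

open Metric Filter Set Topology

/-- The Gromov product `(x|y)_z = ½(d(z,x)+d(z,y)−d(x,y))`. -/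
noncomputable def gromovProd {X : Type*} [MetricSpace X] (x y z : X) : ℝ :=
  (dist z x + dist z y - dist x y) / 2

/-- A parametrized geodesic segment from `x` to `y` (defined on `[0, dist x y]`). -/
def IsGeodesicSegment {X : Type*} [MetricSpace X] (x y : X) (f : ℝ → X) : Prop :=
  f 0 = x ∧ f (dist x y) = y ∧
    ∀ s ∈ Set.Icc (0 : ℝ) (dist x y), ∀ t ∈ Set.Icc (0 : ℝ) (dist x y),
      dist (f s) (f t) = |s - t|

/-- The metric space `X` is geodesic: any two points are joined by a geodesic segment. -/
def GeodesicMetricSpace (X : Type*) [MetricSpace X] : Prop :=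
  ∀ x y : X, ∃ f : ℝ → X, IsGeodesicSegment x y f

/-- `X` is δ-hyperbolic in the sense of Rips: every geodesic triangle is δ-thin,
i.e. each side is contained in the δ-neighbourhood of the union of the other two. -/
def RipsHyperbolic (X : Type*) [MetricSpace X] (δ : ℝ) : Prop :=
  ∀ (x y z : X) (f g h : ℝ → X),
    IsGeodesicSegment x y f → IsGeodesicSegment y z g → IsGeodesicSegment z x h →
      ∀ s ∈ Set.Icc (0 : ℝ) (dist x y),
        infDist (f s) (g '' Set.Icc 0 (dist y z) ∪ h '' Set.Icc 0 (dist z x)) ≤ δ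

/-- A (parametrized) geodesic line in `X`. -/
def IsGeodesicLine {X : Type*} [MetricSpace X] (L : ℝ → X) : Prop :=
  ∀ s t : ℝ, dist (L s) (L t) = |s - t|

/-- A (parametrized) geodesic ray in `X` (parametrized on `[0,∞)`). -/
def IsGeodesicRay {X : Type*} [MetricSpace X] (r : ℝ → X) : Prop :=
  ∀ s t : ℝ, 0 ≤ s → 0 ≤ t → dist (r s) (r t) = |s - t|

/-- `L` is a geodesic from `A⁻` to `A⁺` (oriented toward `A⁺`): it is a geodesic line
such that, with `x₀ = L 0`, the Gromov products `(Aⁿx₀ | L t)_{x₀}` tend to `+∞` as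
`min(n,t) → +∞`, and `(A⁻ⁿx₀ | L (−t))_{x₀}` tend to `+∞` as `min(n,t) → +∞`. -/
def IsGeodesicFromTo {X : Type*} [MetricSpace X] (A : X ≃ᵢ X) (L : ℝ → X) : Prop :=
  IsGeodesicLine L ∧
    (∀ M : ℝ, ∃ N : ℝ, ∀ (n : ℕ) (t : ℝ), N ≤ (n : ℝ) → N ≤ t →
      M ≤ gromovProd ((A ^ n) (L 0)) (L t) (L 0)) ∧
    (∀ M : ℝ, ∃ N : ℝ, ∀ (n : ℕ) (t : ℝ), N ≤ (n : ℝ) → N ≤ t →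
      M ≤ gromovProd ((A⁻¹ ^ n) (L 0)) (L (-t)) (L 0))

/-- An element of `F₂` is primitive if it is the image of a generator under an
automorphism of `F₂` (equivalently, it belongs to some free basis). -/
def Primitive (γ : FreeGroup (Fin 2)) : Prop :=
  ∃ φ : FreeGroup (Fin 2) ≃* FreeGroup (Fin 2), φ (FreeGroup.of 0) = γ

/-- The (reduced) word length of an element of `F₂`. -/
noncomputable def wordLength (γ : FreeGroup (Fin 2)) : ℕ := γ.toWord.length

/-- The cyclically reduced word length `‖γ‖`: the minimum of the word lengths
of the conjugates of `γ`. -/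
noncomputable def cycLength (γ : FreeGroup (Fin 2)) : ℕ :=
  sInf (Set.range fun g : FreeGroup (Fin 2) => wordLength (g * γ * g⁻¹))

/-- `γ` is cyclically reduced if its word length equals its cyclically reduced length. -/
def CyclicallyReduced (γ : FreeGroup (Fin 2)) : Prop :=
  wordLength γ = cycLength γ


section BGFaux

open FreeGroup

/-- Bound the additive value of a character by word length. -/
lemma bgf_abs_le (χ : FreeGroup (Fin 2) →* Multiplicative ℤ) (w : FreeGroup (Fin 2)) :
    |(χ w).toAdd| ≤ (max |(χ (of 0)).toAdd| |(χ (of 1)).toAdd|) * wordLength w := by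
  set c := max |(χ (of 0)).toAdd| |(χ (of 1)).toAdd| with hc
  have hχ : χ = FreeGroup.lift (fun i => χ (of i)) := by
    apply FreeGroup.ext_hom; intro a; simp
  have hletter : ∀ x : Fin 2 × Bool,
      |(cond x.2 (χ (of x.1)) (χ (of x.1))⁻¹).toAdd| ≤ c := by
    rintro ⟨i, b⟩
    fin_cases i <;> cases b <;>
      simp [c, abs_neg, le_max_left, le_max_right]
  have hlist : ∀ L : List (Fin 2 × Bool),
      |(List.prod (L.map fun x => cond x.2 (χ (of x.1)) (χ (of x.1))⁻¹)).toAdd|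
        ≤ c * L.length := by
    intro L
    induction L with
    | nil => simp
    | cons x L ih =>
      simp only [List.map_cons, List.prod_cons, toAdd_mul, List.length_cons]
      calc |(cond x.2 (χ (of x.1)) (χ (of x.1))⁻¹).toAdd
              + (List.prod (L.map fun x => cond x.2 (χ (of x.1)) (χ (of x.1))⁻¹)).toAdd|
          ≤ _ + _ := abs_add_le _ _
        _ ≤ c + c * L.length := add_le_add (hletter x) ih
        _ = c * (L.length + 1) := by ring
  calc |(χ w).toAdd| = |(χ (FreeGroup.mk w.toWord)).toAdd| := by rw [FreeGroup.mk_toWord]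
    _ ≤ c * w.toWord.length := by rw [hχ, FreeGroup.lift_mk]; exact hlist _
    _ = c * wordLength w := rfl

lemma bgf_cyc_nonempty (w : FreeGroup (Fin 2)) :
    (Set.range fun g : FreeGroup (Fin 2) => wordLength (g * w * g⁻¹)).Nonempty :=
  ⟨wordLength w, 1, by simp⟩

lemma bgf_cycLength_le (w : FreeGroup (Fin 2)) : cycLength w ≤ wordLength w := by
  apply Nat.sInf_le
  exact ⟨1, by simp⟩

/-- Bound the additive value of a character by the cyclically reduced length. -/
lemma bgf_abs_le_cyc (χ : FreeGroup (Fin 2) →* Multiplicative ℤ) (w : FreeGroup (Fin 2)) :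
    |(χ w).toAdd| ≤ (max |(χ (of 0)).toAdd| |(χ (of 1)).toAdd|) * cycLength w := by
  have hmem : cycLength w ∈
      Set.range fun g : FreeGroup (Fin 2) => wordLength (g * w * g⁻¹) :=
    Nat.sInf_mem (bgf_cyc_nonempty w)
  obtain ⟨g, hg⟩ := hmem
  have hg' : wordLength (g * w * g⁻¹) = cycLength w := hg
  have hcomm : ∀ a x : Multiplicative ℤ, a * x * a⁻¹ = x := fun a x => by
    rw [mul_comm a x, mul_inv_cancel_right]
  have hconj : χ (g * w * g⁻¹) = χ w := by
    rw [χ.map_mul, χ.map_mul, χ.map_inv, hcomm]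
  calc |(χ w).toAdd| = |(χ (g * w * g⁻¹)).toAdd| := by rw [hconj]
    _ ≤ _ * wordLength (g * w * g⁻¹) := bgf_abs_le χ _
    _ = _ * cycLength w := by rw [hg']

noncomputable def psiF (n : ℕ) : FreeGroup (Fin 2) →* FreeGroup (Fin 2) :=
  FreeGroup.lift ![of 0 ^ n * of 1, of 0]

noncomputable def psiG (n : ℕ) : FreeGroup (Fin 2) →* FreeGroup (Fin 2) :=
  FreeGroup.lift ![of 1, ((of 1)⁻¹) ^ n * of 0]

lemma psiGF (n : ℕ) : (psiG n).comp (psiF n) = MonoidHom.id _ := by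
  apply FreeGroup.ext_hom; intro a
  fin_cases a <;> simp [psiF, psiG, map_mul, map_pow]

lemma psiFG (n : ℕ) : (psiF n).comp (psiG n) = MonoidHom.id _ := by
  apply FreeGroup.ext_hom; intro a
  fin_cases a <;> simp [psiF, psiG, map_mul, map_pow]

noncomputable def psiE (n : ℕ) : FreeGroup (Fin 2) ≃* FreeGroup (Fin 2) :=
  MonoidHom.toMulEquiv (psiF n) (psiG n) (psiGF n) (psiFG n)

lemma psiE_of0 (n : ℕ) : psiE n (of 0) = of 0 ^ n * of 1 := by
  simp [psiE, psiF, MonoidHom.toMulEquiv]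

/-- dist(Aⁿ x, x) ≤ n · dist(A x, x). -/
lemma bgf_dist_pow_le {X : Type*} [MetricSpace X] (A : X ≃ᵢ X) (x : X) (n : ℕ) :
    dist ((A ^ n) x) x ≤ n * dist (A x) x := by
  induction n with
  | zero => simp
  | succ n ih =>
    have h1 : (A ^ (n + 1)) x = (A ^ n) (A x) := by
      rw [pow_succ]; rfl
    calc dist ((A ^ (n + 1)) x) x
        ≤ dist ((A ^ n) (A x)) ((A ^ n) x) + dist ((A ^ n) x) x := by
          rw [h1]; exact dist_triangle _ _ _
      _ = dist (A x) x + dist ((A ^ n) x) x := by rw [(A ^ n).dist_eq]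
      _ ≤ dist (A x) x + n * dist (A x) x := by linarith
      _ = (n + 1 : ℕ) * dist (A x) x := by push_cast; ring

end BGFaux

/-- If `l_S(ρ(γ)) ≥ ‖γ‖/C − D` for every primitive `γ ∈ F₂`, then every
primitive element has hyperbolic image (`l_S > 0`), and for every `K ≥ 0` the set of
cyclically reduced primitive elements whose image has stable norm at most `K` is finite. -/
theorem bowditch_growth_implies_hyperbolic_and_finite
    {X : Type*} [MetricSpace X] (δ : ℝ) (hδ : 0 ≤ δ)
    (hgeo : GeodesicMetricSpace X) (hhyp : RipsHyperbolic X δ)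
    (ρ : FreeGroup (Fin 2) →* (X ≃ᵢ X)) (x₀ : X)
    (lS : FreeGroup (Fin 2) → ℝ)
    (hlS : ∀ γ : FreeGroup (Fin 2),
      Tendsto (fun n : ℕ => dist ((ρ γ ^ n) x₀) x₀ / n) atTop (𝓝 (lS γ)))
    (C D : ℝ) (hC : 0 < C) (hD : 0 ≤ D)
    (hgrowth : ∀ γ : FreeGroup (Fin 2), Primitive γ → (cycLength γ : ℝ) / C - D ≤ lS γ) :
    (∀ γ : FreeGroup (Fin 2), Primitive γ → 0 < lS γ) ∧
      (∀ K : ℝ, 0 ≤ K →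
        {γ : FreeGroup (Fin 2) | Primitive γ ∧ CyclicallyReduced γ ∧ lS γ ≤ K}.Finite) := by
  classical
  -- basic facts about lS
  have hlS_nonneg : ∀ γ, 0 ≤ lS γ := by
    intro γ
    exact ge_of_tendsto' (hlS γ) (fun n => by positivity)
  have hlS_le : ∀ γ, lS γ ≤ dist (ρ γ x₀) x₀ := by
    intro γ
    apply le_of_tendsto (hlS γ)
    filter_upwards [eventually_ge_atTop 1] with n hn
    rw [div_le_iff₀ (by exact_mod_cast hn : (0:ℝ) < n)]
    calc dist ((ρ γ ^ n) x₀) x₀ ≤ n * dist (ρ γ x₀) x₀ := bgf_dist_pow_le _ _ _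
      _ = dist (ρ γ x₀) x₀ * n := by ring
  constructor
  · -- positivity of lS on primitive elements
    intro γ hprim
    by_contra hpos
    have hzero : lS γ = 0 := le_antisymm (not_lt.mp hpos) (hlS_nonneg γ)
    obtain ⟨φ, hφ⟩ := hprim
    set β := φ (FreeGroup.of 1) with hβ
    -- character sending γ to 1
    set χ : FreeGroup (Fin 2) →* Multiplicative ℤ :=
      ((FreeGroup.lift fun i : Fin 2 =>
        if i = 0 then Multiplicative.ofAdd (1:ℤ) else 1)).comp φ.symm.toMonoidHom with hχdef
    have hχγ : χ γ = Multiplicative.ofAdd (1:ℤ) := by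
      have : φ.symm γ = FreeGroup.of 0 := by rw [← hφ, MulEquiv.symm_apply_apply]
      simp [hχdef, this]
    set c : ℤ := max |(χ (FreeGroup.of 0)).toAdd| |(χ (FreeGroup.of 1)).toAdd| with hcdef
    have hc0 : 0 ≤ c := le_trans (abs_nonneg _) (le_max_left _ _)
    have hc1 : 1 ≤ c := by
      have h := bgf_abs_le χ γ
      rw [hχγ] at h
      simp only [toAdd_ofAdd, abs_one] at h
      by_contra hlt
      have hc0' : c = 0 := le_antisymm (by omega) hc0
      rw [← hcdef, hc0'] at h
      simp at h
    set t : ℤ := (χ β).toAdd with htdef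
    set b : ℝ := dist (ρ β x₀) x₀ with hbdef
    have hcC : (0:ℝ) < (c:ℝ) * C := by
      apply mul_pos _ hC
      exact_mod_cast lt_of_lt_of_le one_pos hc1
    -- key estimate for each n
    have key : ∀ n : ℕ, ((n:ℝ) - |t|) / ((c:ℝ) * C) - D - b ≤ dist ((ρ γ ^ n) x₀) x₀ := by
      intro n
      set w := γ ^ n * β with hwdef
      have hPw : Primitive w := by
        refine ⟨(psiE n).trans φ, ?_⟩
        simp only [MulEquiv.trans_apply, psiE_of0, map_mul, map_pow, hφ]
        rfl
      have hgr := hgrowth w hPw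
      -- lower bound on cycLength w
      have hχw : (χ w).toAdd = (n:ℤ) + t := by
        rw [hwdef, map_mul, map_pow, hχγ]
        simp
        rfl
      have habs : (n:ℤ) - |t| ≤ c * cycLength w := by
        have h1 := bgf_abs_le_cyc χ w
        rw [hχw] at h1
        have h2 : (n:ℤ) - |t| ≤ |(n:ℤ) + t| := by
          have := abs_add_le ((n:ℤ) + t) (-t)
          simp only [add_neg_cancel_right, abs_neg] at this
          have hn : |(n:ℤ)| = n := abs_of_nonneg (Int.ofNat_nonneg n)
          linarith [hn ▸ this]
        exact le_trans h2 h1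
      have hcycR : ((n:ℝ) - |(t:ℝ)|) / (c:ℝ) ≤ (cycLength w : ℝ) := by
        rw [div_le_iff₀ (by exact_mod_cast lt_of_lt_of_le one_pos hc1 : (0:ℝ) < (c:ℝ))]
        have h' : ((n:ℝ) - |(t:ℝ)|) ≤ (c:ℝ) * (cycLength w : ℝ) := by
          exact_mod_cast habs
        linarith [h']
      -- upper bound on lS w
      have hup : lS w ≤ b + dist ((ρ γ ^ n) x₀) x₀ := by
        refine le_trans (hlS_le w) ?_
        have hρw : ρ w x₀ = (ρ γ ^ n) (ρ β x₀) := by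
          rw [hwdef, map_mul, map_pow]; rfl
        rw [hρw]
        calc dist ((ρ γ ^ n) (ρ β x₀)) x₀
            ≤ dist ((ρ γ ^ n) (ρ β x₀)) ((ρ γ ^ n) x₀) + dist ((ρ γ ^ n) x₀) x₀ :=
              dist_triangle _ _ _
          _ = b + dist ((ρ γ ^ n) x₀) x₀ := by rw [(ρ γ ^ n).dist_eq]
      have hdiv : ((n:ℝ) - |t|) / ((c:ℝ) * C) ≤ (cycLength w : ℝ) / C := by
        have hcpos : (0:ℝ) < (c:ℝ) := by exact_mod_cast lt_of_lt_of_le one_pos hc1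
        rw [div_le_div_iff₀ hcC hC]
        have h5 := mul_le_mul_of_nonneg_right hcycR (le_of_lt hcC)
        have h6 : ((n:ℝ) - |(t:ℝ)|) / (c:ℝ) * ((c:ℝ) * C) = ((n:ℝ) - |(t:ℝ)|) * C := by
          field_simp
        push_cast
        linarith [h5, h6.le, h6.ge]
      linarith [hgr, hup, hdiv]
    -- take limits
    set E : ℝ := (|t| : ℝ) / ((c:ℝ) * C) + D + b with hEdef
    have hfle : ∀ᶠ n : ℕ in atTop,
        1 / ((c:ℝ) * C) - E * (1 / (n:ℝ)) ≤ dist ((ρ γ ^ n) x₀) x₀ / n := by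
      filter_upwards [eventually_ge_atTop 1] with n hn
      have hnpos : (0:ℝ) < n := by exact_mod_cast hn
      have hk := key n
      have heq : (((n:ℝ) - |t|) / ((c:ℝ) * C) - D - b) / n
          = 1 / ((c:ℝ) * C) - E * (1 / (n:ℝ)) := by
        rw [hEdef]
        field_simp
        push_cast
        ring
      rw [← heq]
      exact div_le_div_of_nonneg_right hk hnpos.le |>.trans_eq rfl
    have hlim1 : Tendsto (fun n : ℕ => 1 / ((c:ℝ) * C) - E * (1 / (n:ℝ))) atTop
        (𝓝 (1 / ((c:ℝ) * C))) := by
      have : Tendsto (fun n : ℕ => E * (1 / (n:ℝ))) atTop (𝓝 0) := by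
        simpa using (tendsto_one_div_atTop_nhds_zero_nat).const_mul E
      simpa using (tendsto_const_nhds (x := 1 / ((c:ℝ) * C))).sub this
    have hlim2 : Tendsto (fun n : ℕ => dist ((ρ γ ^ n) x₀) x₀ / n) atTop (𝓝 0) := by
      simpa [hzero] using hlS γ
    have hcon : 1 / ((c:ℝ) * C) ≤ 0 := le_of_tendsto_of_tendsto hlim1 hlim2 hfle
    have : (0:ℝ) < 1 / ((c:ℝ) * C) := by positivity
    linarith
  · -- finiteness
    intro K hK
    set N : ℕ := ⌈C * (K + D)⌉₊ with hN
    have hsub : {γ : FreeGroup (Fin 2) | Primitive γ ∧ CyclicallyReduced γ ∧ lS γ ≤ K}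
        ⊆ FreeGroup.toWord ⁻¹' {L : List (Fin 2 × Bool) | L.length ≤ N} := by
      rintro γ ⟨hp, hcr, hle⟩
      have hgr := hgrowth γ hp
      have h1 : (cycLength γ : ℝ) ≤ C * (K + D) := by
        have : (cycLength γ : ℝ) / C ≤ K + D := by linarith
        rw [div_le_iff₀ hC] at this
        linarith [this]
      have h2 : (cycLength γ : ℝ) ≤ (N : ℝ) := le_trans h1 (Nat.le_ceil _)
      have h3 : cycLength γ ≤ N := by exact_mod_cast h2
      have h4 : wordLength γ ≤ N := by rw [hcr]; exact h3
      exact h4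
    exact Set.Finite.subset
      ((List.finite_length_le (Fin 2 × Bool) N).preimage
        (FreeGroup.toWord_injective.injOn)) hsub
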